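/- Let X ⊂ ℙ¹ × ℙ² be the product D × B of a set D of d distinct points of ℙ¹ and a set B of b distinct points of ℙ². Embed ℙ¹ × ℙ² in ℙ⁵ via the Segre embedding and project from a general point of ℙ⁵ to ℙ⁴. Then the image Z of X in ℙ⁴ consists of bd distinct points, there are b pairwise skew lines each containing exactly d points of Z, and there are d planes each containing exactly b points of Z, with each line meeting each plane in exactly one point of Z. -/

import Mathlib

noncomputable section

/-- The underlying vector space of ℙ¹ over ℂ. -/
abbrev V2 : Type := Fin 2 → ℂ

/-- The underlying vector space of ℙ² over ℂ. -/
abbrev V3 : Type := Fin 3 → ℂ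

/-- The underlying vector space of ℙ⁴ over ℂ. -/
abbrev V5 : Type := Fin 5 → ℂ

/-- The underlying vector space of ℙ⁵ over ℂ. -/
abbrev V6 : Type := Fin 6 → ℂ

/-- The Segre map ℂ² × ℂ³ → ℂ⁶ inducing the Segre embedding ℙ¹ × ℙ² → ℙ⁵. -/
def segre (u : V2) (v : V3) : V6 :=
  ![u 0 * v 0, u 0 * v 1, u 0 * v 2, u 1 * v 0, u 1 * v 1, u 1 * v 2]

/-- The image in ℙ⁴ (as a linear subspace of ℂ⁵) of the Segre line `ℙ¹ × {B i}`
under the projection `L`. -/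
def lineOf (L : V6 →ₗ[ℂ] V5) (w : V3) : Submodule ℂ V5 :=
  Submodule.map L (Submodule.span ℂ (Set.range fun u : V2 => segre u w))

/-- The image in ℙ⁴ (as a linear subspace of ℂ⁵) of the Segre plane `{D j} × ℙ²`
under the projection `L`. -/
def planeOf (L : V6 →ₗ[ℂ] V5) (u : V2) : Submodule ℂ V5 :=
  Submodule.map L (Submodule.span ℂ (Set.range fun v : V3 => segre u v))

/-! ### Auxiliary material -/

open Submodule Module

def sIdx (k : Fin 2) (m : Fin 3) : Fin 6 :=
  ⟨3 * k.val + m.val, by have := k.isLt; have := m.isLt; omega⟩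

lemma segre_entry (u : V2) (v : V3) (k : Fin 2) (m : Fin 3) :
    segre u v (sIdx k m) = u k * v m := by
  fin_cases k <;> fin_cases m <;> rfl

lemma cons_val_five' {α : Type*} (a b c d e f : α) :
    ![a, b, c, d, e, f] 5 = f := rfl

/-- The Segre map as a linear map in the first variable. -/
def ellMap (w : V3) : V2 →ₗ[ℂ] V6 where
  toFun u := segre u w
  map_add' u u' := by funext x; fin_cases x <;> simp [segre, cons_val_five'] <;> ring
  map_smul' c u := by funext x; fin_cases x <;> simp [segre, cons_val_five'] <;> ring

/-- The Segre map as a linear map in the second variable. -/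
def rhoMap (u : V2) : V3 →ₗ[ℂ] V6 where
  toFun v := segre u v
  map_add' v v' := by funext x; fin_cases x <;> simp [segre, cons_val_five'] <;> ring
  map_smul' c v := by funext x; fin_cases x <;> simp [segre, cons_val_five'] <;> ring

def lineSpan (w : V3) : Submodule ℂ V6 := LinearMap.range (ellMap w)

def planeSpan (u : V2) : Submodule ℂ V6 := LinearMap.range (rhoMap u)

lemma mem_lineSpan {w : V3} {x : V6} : x ∈ lineSpan w ↔ ∃ u, segre u w = x :=
  LinearMap.mem_range

lemma mem_planeSpan {u : V2} {x : V6} : x ∈ planeSpan u ↔ ∃ v, segre u v = x :=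
  LinearMap.mem_range

lemma span_range_ell (w : V3) :
    span ℂ (Set.range fun u : V2 => segre u w) = lineSpan w := by
  rw [show (fun u : V2 => segre u w) = ⇑(ellMap w) from rfl, ← LinearMap.coe_range,
    Submodule.span_eq]; rfl

lemma span_range_rho (u : V2) :
    span ℂ (Set.range fun v : V3 => segre u v) = planeSpan u := by
  rw [show (fun v : V3 => segre u v) = ⇑(rhoMap u) from rfl, ← LinearMap.coe_range,
    Submodule.span_eq]; rfl

lemma segre_eq_entries {u u' : V2} {v v' : V3} (h : segre u v = segre u' v')
    (k : Fin 2) (m : Fin 3) : u k * v m = u' k * v' m := by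
  have := congrFun h (sIdx k m); rwa [segre_entry, segre_entry] at this

lemma segre_ne_zero {u : V2} {v : V3} (hu : u ≠ 0) (hv : v ≠ 0) : segre u v ≠ 0 := by
  obtain ⟨k, hk⟩ := Function.ne_iff.mp hu
  obtain ⟨m, hm⟩ := Function.ne_iff.mp hv
  intro h
  have h1 := congrFun h (sIdx k m)
  rw [segre_entry] at h1
  exact mul_ne_zero (by simpa using hk) (by simpa using hm) (by simpa using h1)

lemma ell_inj {w : V3} (hw : w ≠ 0) : Function.Injective (ellMap w) := by
  rw [← LinearMap.ker_eq_bot, eq_bot_iff]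
  intro u hu
  obtain ⟨m, hm⟩ := Function.ne_iff.mp hw
  have hm' : w m ≠ 0 := by simpa using hm
  have h0 : segre u w = 0 := hu
  simp only [Submodule.mem_bot]
  funext k
  have := congrFun h0 (sIdx k m)
  rw [segre_entry] at this
  have : u k * w m = 0 := by simpa using this
  simpa using (mul_eq_zero.mp this).resolve_right hm'

lemma rho_inj {u : V2} (hu : u ≠ 0) : Function.Injective (rhoMap u) := by
  rw [← LinearMap.ker_eq_bot, eq_bot_iff]
  intro v hv
  obtain ⟨k, hk⟩ := Function.ne_iff.mp hu
  have hk' : u k ≠ 0 := by simpa using hk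
  have h0 : segre u v = 0 := hv
  simp only [Submodule.mem_bot]
  funext m
  have := congrFun h0 (sIdx k m)
  rw [segre_entry] at this
  have : u k * v m = 0 := by simpa using this
  simpa using (mul_eq_zero.mp this).resolve_left hk'

lemma finrank_lineSpan {w : V3} (hw : w ≠ 0) : finrank ℂ (lineSpan w) = 2 := by
  rw [lineSpan, LinearMap.finrank_range_of_inj (ell_inj hw)]
  simp

lemma finrank_planeSpan {u : V2} (hu : u ≠ 0) : finrank ℂ (planeSpan u) = 3 := by
  rw [planeSpan, LinearMap.finrank_range_of_inj (rho_inj hu)]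
  simp

lemma finrank_lineSpan_le (w : V3) : finrank ℂ (lineSpan w) ≤ 2 := by
  exact le_trans (LinearMap.finrank_range_le (ellMap w)) (by simp)

lemma finrank_planeSpan_le (u : V2) : finrank ℂ (planeSpan u) ≤ 3 := by
  exact le_trans (LinearMap.finrank_range_le (rhoMap u)) (by simp)

/-- Factorization: if `segre u w = segre p v` with `p ≠ 0`, `w ≠ 0`, then both sides are
`c • segre p w` for some scalar `c`. -/
lemma segre_factor {u p : V2} {v w : V3} (hp : p ≠ 0) (hw : w ≠ 0)
    (h : segre u w = segre p v) : ∃ c : ℂ, u = c • p ∧ v = c • w := by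
  obtain ⟨k0, hk0⟩ := Function.ne_iff.mp hp
  have hk0' : p k0 ≠ 0 := by simpa using hk0
  obtain ⟨m0, hm0⟩ := Function.ne_iff.mp hw
  have hm0' : w m0 ≠ 0 := by simpa using hm0
  refine ⟨v m0 / w m0, ?_, ?_⟩
  · funext k
    have h1 := segre_eq_entries h k m0
    simp only [Pi.smul_apply, smul_eq_mul]
    rw [div_mul_eq_mul_div, eq_div_iff hm0']
    linear_combination h1
  · funext m
    have h1 := segre_eq_entries h k0 m
    have h2 := segre_eq_entries h k0 m0
    simp only [Pi.smul_apply, smul_eq_mul]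
    rw [div_mul_eq_mul_div, eq_div_iff hm0']
    apply mul_right_cancel₀ hk0'
    linear_combination w m * h2 - w m0 * h1

/-- Two Segre lines over non-proportional `w, w'` only share `0`. -/
lemma line_inter_aux {w w' : V3} (hww' : ∀ c : ℂ, w ≠ c • w') {u u' : V2}
    (h : segre u w = segre u' w') : u = 0 := by
  by_contra hu
  obtain ⟨k, hk⟩ := Function.ne_iff.mp hu
  have hk' : u k ≠ 0 := by simpa using hk
  apply hww' (u' k / u k)
  funext m
  have h1 := segre_eq_entries h k m
  simp only [Pi.smul_apply, smul_eq_mul]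
  rw [div_mul_eq_mul_div, eq_div_iff hk']
  linear_combination h1

/-! ### Linear functionals and linear polynomials -/

/-- A linear functional as a degree-1 polynomial. -/
def linPoly (φ : V6 →ₗ[ℂ] ℂ) : MvPolynomial (Fin 6) ℂ :=
  ∑ k : Fin 6, MvPolynomial.C (φ (Pi.single k 1)) * MvPolynomial.X k

lemma eval_linPoly (φ : V6 →ₗ[ℂ] ℂ) (Q : V6) :
    MvPolynomial.eval Q (linPoly φ) = φ Q := by
  have hs : ∀ k : Fin 6, (Pi.single k 1 : V6) = fun j => if k = j then 1 else 0 := by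
    intro k; funext j; simp [Pi.single_apply, eq_comm]
  rw [linPoly, map_sum, LinearMap.pi_apply_eq_sum_univ φ Q]
  refine Finset.sum_congr rfl fun k _ => ?_
  rw [← hs k]
  simp [mul_comm]

lemma linPoly_isHomogeneous (φ : V6 →ₗ[ℂ] ℂ) : (linPoly φ).IsHomogeneous 1 :=
  MvPolynomial.IsHomogeneous.sum _ _ _ fun k _ => by
    simpa using (MvPolynomial.isHomogeneous_C _ (φ (Pi.single k 1))).mul
      (MvPolynomial.isHomogeneous_X _ k)

lemma linPoly_ne_zero {φ : V6 →ₗ[ℂ] ℂ} (hφ : φ ≠ 0) : linPoly φ ≠ 0 := by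
  obtain ⟨x, hx⟩ : ∃ x, φ x ≠ 0 := by
    by_contra hc; push_neg at hc
    exact hφ (LinearMap.ext fun x => by simpa using hc x)
  intro h0
  exact hx (by rw [← eval_linPoly φ x, h0, map_zero])

lemma exists_functional {W : Submodule ℂ V6} (hW : W ≠ ⊤) :
    ∃ φ : V6 →ₗ[ℂ] ℂ, φ ≠ 0 ∧ ∀ x ∈ W, φ x = 0 := by
  obtain ⟨φ, hφ, hmap⟩ :=
    W.exists_dual_map_eq_bot_of_lt_top (lt_top_iff_ne_top.mpr hW) inferInstance
  refine ⟨φ, hφ, fun x hx => ?_⟩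
  have : φ x ∈ W.map φ := Submodule.mem_map_of_mem hx
  rwa [hmap, Submodule.mem_bot] at this

lemma ne_top_of_finrank_le {W : Submodule ℂ V6} (h : finrank ℂ W ≤ 5) : W ≠ ⊤ := by
  intro ht
  rw [ht, finrank_top] at h
  simp only [Module.finrank_fin_fun] at h
  omega

/-! ### Projection lemmas -/

lemma mem_ker_zero {L : V6 →ₗ[ℂ] V5} {P : V6} (hker : LinearMap.ker L = span ℂ {P})
    {U : Submodule ℂ V6} (hPU : P ∉ U) {z : V6} (h1 : L z = 0) (h2 : z ∈ U) : z = 0 := by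
  have hz : z ∈ LinearMap.ker L := LinearMap.mem_ker.mpr h1
  rw [hker, Submodule.mem_span_singleton] at hz
  obtain ⟨c, rfl⟩ := hz
  rcases eq_or_ne c 0 with rfl | hc
  · simp
  · exact absurd (by simpa [smul_smul, inv_mul_cancel₀ hc] using U.smul_mem c⁻¹ h2) hPU

lemma finrank_map_of {L : V6 →ₗ[ℂ] V5} {P : V6} (hker : LinearMap.ker L = span ℂ {P})
    {U : Submodule ℂ V6} (hPU : P ∉ U) :
    finrank ℂ (Submodule.map L U) = finrank ℂ U := by
  have hinj : Function.Injective (L.comp U.subtype) := by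
    rw [← LinearMap.ker_eq_bot, eq_bot_iff]
    intro x hx
    have hx0 : L (x : V6) = 0 := hx
    have : (x : V6) = 0 := mem_ker_zero hker hPU hx0 x.2
    simpa [Submodule.mem_bot] using Subtype.ext this
  have h := LinearMap.finrank_range_of_inj hinj
  rwa [LinearMap.range_comp, Submodule.range_subtype] at h

lemma map_inf_map {L : V6 →ₗ[ℂ] V5} {P : V6} (hker : LinearMap.ker L = span ℂ {P})
    {U U' : Submodule ℂ V6} (hPU : P ∉ U ⊔ U') :
    Submodule.map L U ⊓ Submodule.map L U' = Submodule.map L (U ⊓ U') := by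
  apply le_antisymm
  · intro z hz
    obtain ⟨h1, h2⟩ := Submodule.mem_inf.mp hz
    obtain ⟨x, hx, hxz⟩ := Submodule.mem_map.mp h1
    obtain ⟨y, hy, hyz⟩ := Submodule.mem_map.mp h2
    have hxy : x - y = 0 := by
      refine mem_ker_zero hker hPU ?_ (sub_mem (mem_sup_left hx) (mem_sup_right hy))
      rw [map_sub, hxz, hyz, sub_self]
    have hxy' : x = y := sub_eq_zero.mp hxy
    exact ⟨x, Submodule.mem_inf.mpr ⟨hx, hxy' ▸ hy⟩, hxz⟩
  · exact le_inf (Submodule.map_mono inf_le_left) (Submodule.map_mono inf_le_right)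

/-- Let `X ⊂ ℙ¹ × ℙ²` be the product `D × B` of a set `D` of `d` distinct points of ℙ¹
and a set `B` of `b` distinct points of ℙ².  Embed `ℙ¹ × ℙ²` in ℙ⁵ via the Segre
embedding and project from a general point of ℙ⁵ (any point of a nonempty Zariski-open
set) to ℙ⁴.  Then the image `Z` of `X` in ℙ⁴ consists of `b*d` distinct points, there
are `b` pairwise skew lines each containing exactly `d` points of `Z`, and there are `d`
planes each containing exactly `b` points of `Z`, with each line meeting each plane in
exactly one point. -/
theorem stmt_16 (b d : ℕ) (hb : 1 ≤ b) (hd : 1 ≤ d)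
    (D : Fin d → V2) (hD : ∀ j, D j ≠ 0)
    (hDdist : ∀ j j', j ≠ j' → ∀ c : ℂ, D j ≠ c • D j')
    (B : Fin b → V3) (hB : ∀ i, B i ≠ 0)
    (hBdist : ∀ i i', i ≠ i' → ∀ c : ℂ, B i ≠ c • B i') :
    ∃ F : MvPolynomial (Fin 6) ℂ, F ≠ 0 ∧ (∃ n, F.IsHomogeneous n) ∧
      ∀ P : V6, P ≠ 0 → MvPolynomial.eval P F ≠ 0 →
        ∀ L : V6 →ₗ[ℂ] V5, Function.Surjective L →
          LinearMap.ker L = Submodule.span ℂ {P} →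
          -- the b*d image points are well defined and distinct in ℙ⁴:
          (∀ i j, L (segre (D j) (B i)) ≠ 0) ∧
          Function.Injective (fun x : Fin b × Fin d =>
            Submodule.span ℂ ({L (segre (D x.2) (B x.1))} : Set V5)) ∧
          -- the b lines, pairwise skew:
          (∀ i, Module.finrank ℂ (lineOf L (B i)) = 2) ∧
          (∀ i i', i ≠ i' → lineOf L (B i) ⊓ lineOf L (B i') = ⊥) ∧
          -- the d planes:
          (∀ j, Module.finrank ℂ (planeOf L (D j)) = 3) ∧
          -- each image point lies on its line and on its plane:
          (∀ i j, L (segre (D j) (B i)) ∈ lineOf L (B i) ∧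
                  L (segre (D j) (B i)) ∈ planeOf L (D j)) ∧
          -- each line contains exactly the d points of Z with its index,
          -- and each plane exactly the b points of Z with its index:
          (∀ i i' j, L (segre (D j) (B i')) ∈ lineOf L (B i) → i' = i) ∧
          (∀ j j' i, L (segre (D j') (B i)) ∈ planeOf L (D j) → j' = j) ∧
          -- each line meets each plane in exactly one point:
          (∀ i j, Module.finrank ℂ ↥(lineOf L (B i) ⊓ planeOf L (D j)) = 1) := by
  classical
  -- notation
  have hptl : ∀ i j, segre (D j) (B i) ∈ lineSpan (B i) := fun i j => ⟨D j, rfl⟩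
  have hptp : ∀ i j, segre (D j) (B i) ∈ planeSpan (D j) := fun i j => ⟨B i, rfl⟩
  have hptne : ∀ i j, segre (D j) (B i) ≠ 0 := fun i j => segre_ne_zero (hD j) (hB i)
  -- the five families of proper subspaces and their functionals
  have hW1 : ∀ i : Fin b, lineSpan (B i) ≠ ⊤ := fun i =>
    ne_top_of_finrank_le (le_trans (finrank_lineSpan_le _) (by omega))
  have hW2 : ∀ j : Fin d, planeSpan (D j) ≠ ⊤ := fun j =>
    ne_top_of_finrank_le (le_trans (finrank_planeSpan_le _) (by omega))
  have hW3 : ∀ q : Fin b × Fin b, lineSpan (B q.1) ⊔ lineSpan (B q.2) ≠ ⊤ := fun q => by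
    refine ne_top_of_finrank_le (le_trans (Submodule.finrank_add_le_finrank_add_finrank _ _) ?_)
    have := finrank_lineSpan_le (B q.1); have := finrank_lineSpan_le (B q.2); omega
  have hW4 : ∀ q : Fin b × Fin d, lineSpan (B q.1) ⊔ planeSpan (D q.2) ≠ ⊤ := fun q => by
    refine ne_top_of_finrank_le (le_trans (Submodule.finrank_add_le_finrank_add_finrank _ _) ?_)
    have := finrank_lineSpan_le (B q.1); have := finrank_planeSpan_le (D q.2); omega
  have hW5 : ∀ q : Fin d × Fin d × Fin b,
      planeSpan (D q.1) ⊔ span ℂ {segre (D q.2.1) (B q.2.2)} ≠ ⊤ := fun q => by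
    refine ne_top_of_finrank_le (le_trans (Submodule.finrank_add_le_finrank_add_finrank _ _) ?_)
    have h1 := finrank_planeSpan_le (D q.1)
    have h2 : finrank ℂ (span ℂ {segre (D q.2.1) (B q.2.2)}) = 1 :=
      finrank_span_singleton (hptne q.2.2 q.2.1)
    omega
  choose φ1 hφ1 hv1 using fun i => exists_functional (hW1 i)
  choose φ2 hφ2 hv2 using fun j => exists_functional (hW2 j)
  choose φ3 hφ3 hv3 using fun q => exists_functional (hW3 q)
  choose φ4 hφ4 hv4 using fun q => exists_functional (hW4 q)
  choose φ5 hφ5 hv5 using fun q => exists_functional (hW5 q)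
  have hhom := ((((MvPolynomial.IsHomogeneous.prod Finset.univ _
        (fun _ => 1) fun s _ => linPoly_isHomogeneous (φ1 s)).mul
      (MvPolynomial.IsHomogeneous.prod Finset.univ _ (fun _ => 1)
        fun s _ => linPoly_isHomogeneous (φ2 s))).mul
      (MvPolynomial.IsHomogeneous.prod Finset.univ _ (fun _ => 1)
        fun s _ => linPoly_isHomogeneous (φ3 s))).mul
      (MvPolynomial.IsHomogeneous.prod Finset.univ _ (fun _ => 1)
        fun s _ => linPoly_isHomogeneous (φ4 s))).mul
      (MvPolynomial.IsHomogeneous.prod Finset.univ _ (fun _ => 1)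
        fun s _ => linPoly_isHomogeneous (φ5 s))
  refine ⟨((((∏ i : Fin b, linPoly (φ1 i)) * ∏ j : Fin d, linPoly (φ2 j)) *
      ∏ q : Fin b × Fin b, linPoly (φ3 q)) * ∏ q : Fin b × Fin d, linPoly (φ4 q)) *
      ∏ q : Fin d × Fin d × Fin b, linPoly (φ5 q), ?_, ⟨_, hhom⟩, ?_⟩
  · refine mul_ne_zero (mul_ne_zero (mul_ne_zero (mul_ne_zero ?_ ?_) ?_) ?_) ?_ <;>
      exact Finset.prod_ne_zero_iff.mpr fun s _ => linPoly_ne_zero (by first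
        | exact hφ1 s | exact hφ2 s | exact hφ3 s | exact hφ4 s | exact hφ5 s)
  · intro P hP hFP L hLsurj hker
    simp only [map_mul, map_prod, eval_linPoly, mul_ne_zero_iff,
      Finset.prod_ne_zero_iff] at hFP
    obtain ⟨⟨⟨⟨h1, h2⟩, h3⟩, h4⟩, h5⟩ := hFP
    have hP1 : ∀ i, P ∉ lineSpan (B i) := fun i hm =>
      h1 i (Finset.mem_univ i) (hv1 i P hm)
    have hP2 : ∀ j, P ∉ planeSpan (D j) := fun j hm =>
      h2 j (Finset.mem_univ j) (hv2 j P hm)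
    have hP3 : ∀ i i', P ∉ lineSpan (B i) ⊔ lineSpan (B i') := fun i i' hm =>
      h3 (i, i') (Finset.mem_univ _) (hv3 (i, i') P hm)
    have hP4 : ∀ i j, P ∉ lineSpan (B i) ⊔ planeSpan (D j) := fun i j hm =>
      h4 (i, j) (Finset.mem_univ _) (hv4 (i, j) P hm)
    have hP5 : ∀ j j' i, P ∉ planeSpan (D j) ⊔ span ℂ {segre (D j') (B i)} :=
      fun j j' i hm => h5 (j, j', i) (Finset.mem_univ _) (hv5 (j, j', i) P hm)
    have hlineOf : ∀ i, lineOf L (B i) = Submodule.map L (lineSpan (B i)) := fun i => by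
      rw [lineOf, span_range_ell]
    have hplaneOf : ∀ j, planeOf L (D j) = Submodule.map L (planeSpan (D j)) := fun j => by
      rw [planeOf, span_range_rho]
    -- intersections of Segre subspaces
    have hll : ∀ i i', i ≠ i' → lineSpan (B i) ⊓ lineSpan (B i') = ⊥ := by
      intro i i' hne
      rw [eq_bot_iff]
      intro x hx
      obtain ⟨hx1, hx2⟩ := Submodule.mem_inf.mp hx
      obtain ⟨u, rfl⟩ := mem_lineSpan.mp hx1
      obtain ⟨u', hu'⟩ := mem_lineSpan.mp hx2
      have hu0 : u = 0 := line_inter_aux (fun c => hBdist i i' hne c) hu'.symm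
      subst hu0
      simp [Submodule.mem_bot, show segre 0 (B i) = 0 from (ellMap (B i)).map_zero]
    have hlp : ∀ i j, lineSpan (B i) ⊓ planeSpan (D j) = span ℂ {segre (D j) (B i)} := by
      intro i j
      apply le_antisymm
      · intro x hx
        obtain ⟨hx1, hx2⟩ := Submodule.mem_inf.mp hx
        obtain ⟨u, rfl⟩ := mem_lineSpan.mp hx1
        obtain ⟨v, hv⟩ := mem_planeSpan.mp hx2
        obtain ⟨c, hc1, hc2⟩ := segre_factor (hD j) (hB i) hv.symm
        rw [Submodule.mem_span_singleton]
        refine ⟨c, ?_⟩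
        rw [hc1]
        exact ((ellMap (B i)).map_smul c (D j)).symm
      · rw [Submodule.span_le, Set.singleton_subset_iff]
        exact Submodule.mem_inf.mpr ⟨hptl i j, hptp i j⟩
    -- the nine conclusions
    have G1 : ∀ i j, L (segre (D j) (B i)) ≠ 0 := fun i j h =>
      hptne i j (mem_ker_zero hker (hP1 i) h (hptl i j))
    have G6 : ∀ i j, L (segre (D j) (B i)) ∈ lineOf L (B i) ∧
        L (segre (D j) (B i)) ∈ planeOf L (D j) := fun i j => by
      rw [hlineOf, hplaneOf]
      exact ⟨Submodule.mem_map_of_mem (hptl i j), Submodule.mem_map_of_mem (hptp i j)⟩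
    have G7 : ∀ i i' j, L (segre (D j) (B i')) ∈ lineOf L (B i) → i' = i := by
      intro i i' j h
      by_contra hne
      rw [hlineOf] at h
      obtain ⟨x, hx, hxL⟩ := Submodule.mem_map.mp h
      have hsub : segre (D j) (B i') - x = 0 := by
        refine mem_ker_zero hker (hP3 i i') ?_
          (sub_mem (mem_sup_right (hptl i' j)) (mem_sup_left hx))
        rw [map_sub, hxL, sub_self]
      have hx' : segre (D j) (B i') = x := sub_eq_zero.mp hsub
      have hmem : segre (D j) (B i') ∈ lineSpan (B i) ⊓ lineSpan (B i') :=
        Submodule.mem_inf.mpr ⟨hx' ▸ hx, hptl i' j⟩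
      rw [hll i i' (fun hh => hne hh.symm)] at hmem
      exact hptne i' j (by simpa using hmem)
    have G8 : ∀ j j' i, L (segre (D j') (B i)) ∈ planeOf L (D j) → j' = j := by
      intro j j' i h
      by_contra hne
      rw [hplaneOf] at h
      obtain ⟨x, hx, hxL⟩ := Submodule.mem_map.mp h
      have hsub : segre (D j') (B i) - x = 0 := by
        refine mem_ker_zero hker (hP5 j j' i) ?_
          (sub_mem (mem_sup_right (Submodule.mem_span_singleton_self _)) (mem_sup_left hx))
        rw [map_sub, hxL, sub_self]
      have hx' : segre (D j') (B i) = x := sub_eq_zero.mp hsub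
      obtain ⟨v, hv⟩ := mem_planeSpan.mp (hx' ▸ hx)
      obtain ⟨c, hc1, hc2⟩ := segre_factor (hD j) (hB i) hv.symm
      exact hDdist j' j hne c hc1
    have G3 : ∀ i, Module.finrank ℂ (lineOf L (B i)) = 2 := fun i => by
      rw [hlineOf, finrank_map_of hker (hP1 i), finrank_lineSpan (hB i)]
    have G5 : ∀ j, Module.finrank ℂ (planeOf L (D j)) = 3 := fun j => by
      rw [hplaneOf, finrank_map_of hker (hP2 j), finrank_planeSpan (hD j)]
    have G4 : ∀ i i', i ≠ i' → lineOf L (B i) ⊓ lineOf L (B i') = ⊥ := by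
      intro i i' hne
      rw [hlineOf, hlineOf, map_inf_map hker (hP3 i i'), hll i i' hne, Submodule.map_bot]
    have G9 : ∀ i j, Module.finrank ℂ ↥(lineOf L (B i) ⊓ planeOf L (D j)) = 1 := by
      intro i j
      have hle : span ℂ {segre (D j) (B i)} ≤ lineSpan (B i) :=
        Submodule.span_le.mpr (Set.singleton_subset_iff.mpr (hptl i j))
      rw [hlineOf, hplaneOf, map_inf_map hker (hP4 i j), hlp i j,
        finrank_map_of hker (fun hm => hP1 i (hle hm)),
        finrank_span_singleton (hptne i j)]
    have G2 : Function.Injective (fun x : Fin b × Fin d =>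
        Submodule.span ℂ ({L (segre (D x.2) (B x.1))} : Set V5)) := by
      intro x y h
      simp only at h
      have hy : L (segre (D y.2) (B y.1)) ∈
          span ℂ ({L (segre (D x.2) (B x.1))} : Set V5) :=
        h ▸ Submodule.mem_span_singleton_self _
      have hle1 : span ℂ ({L (segre (D x.2) (B x.1))} : Set V5) ≤ lineOf L (B x.1) :=
        Submodule.span_le.mpr (Set.singleton_subset_iff.mpr (G6 x.1 x.2).1)
      have hle2 : span ℂ ({L (segre (D x.2) (B x.1))} : Set V5) ≤ planeOf L (D x.2) :=
        Submodule.span_le.mpr (Set.singleton_subset_iff.mpr (G6 x.1 x.2).2)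
      have e1 : y.1 = x.1 := G7 x.1 y.1 y.2 (hle1 hy)
      have e2 : y.2 = x.2 := G8 x.2 y.2 y.1 (hle2 hy)
      exact Prod.ext e1.symm e2.symm
    exact ⟨G1, G2, G3, G4, G5, G6, G7, G8, G9⟩
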